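/- Let ν be a positive integer and ε > 0. Define g(z) = (z+1)^{ν+1} − (1+ε)z^{ν+1} for z > 0. Then g(z) ≤ (1+1/ε)^ν · ν^ν for all z > 0. -/

import Mathlib

theorem g_bound (ν : ℕ) (hν : 0 < ν) (ε : ℝ) (hε : 0 < ε) (z : ℝ) (hz : 0 < z) :
    (z + 1) ^ (ν + 1) - (1 + ε) * z ^ (ν + 1) ≤ (1 + 1 / ε) ^ ν * (ν : ℝ) ^ ν := by
  set s : ℝ := (1 + ε) ^ ((ν : ℝ)⁻¹) with hs_def
  have hν' : (0:ℝ) < ν := by exact_mod_cast hν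
  have hs1 : 1 < s := by
    rw [hs_def]
    exact Real.one_lt_rpow_iff_of_pos (by linarith) |>.mpr (Or.inl ⟨by linarith, by positivity⟩)
  have hs0 : (0:ℝ) < s := by linarith
  have hsν : s ^ ν = 1 + ε := by
    rw [hs_def, ← Real.rpow_natCast ((1+ε) ^ _) ν, ← Real.rpow_mul (by linarith),
      inv_mul_cancel₀ (ne_of_gt hν'), Real.rpow_one]
  have key : s * (s ^ ν - 1) ≤ ν * s ^ ν * (s - 1) := by
    have hgeom : s ^ ν - 1 = (∑ i ∈ Finset.range ν, s ^ i) * (s - 1) := (geom_sum_mul s ν).symm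
    have hsum : s * (∑ i ∈ Finset.range ν, s ^ i) ≤ ν * s ^ ν := by
      rw [Finset.mul_sum]
      calc ∑ i ∈ Finset.range ν, s * s ^ i ≤ ∑ i ∈ Finset.range ν, s ^ ν := by
            apply Finset.sum_le_sum
            intro i hi
            rw [← pow_succ']
            exact pow_le_pow_right₀ (le_of_lt hs1) (Finset.mem_range.mp hi)
        _ = ν * s ^ ν := by rw [Finset.sum_const, Finset.card_range, nsmul_eq_mul]
    calc s * (s ^ ν - 1) = s * (∑ i ∈ Finset.range ν, s ^ i) * (s - 1) := by rw [hgeom]; ring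
      _ ≤ ν * s ^ ν * (s - 1) := mul_le_mul_of_nonneg_right hsum (by linarith)
  set t : ℝ := 1 - s⁻¹ with ht_def
  have ht0 : 0 < t := by
    have : s⁻¹ < 1 := inv_lt_one_of_one_lt₀ hs1
    simp [ht_def]; linarith
  have hl0 : (0:ℝ) ≤ s⁻¹ := by positivity
  -- convexity step
  have hconv := (convexOn_pow (ν+1)).2 (Set.mem_Ici.mpr (by positivity : (0:ℝ) ≤ z * s))
    (Set.mem_Ici.mpr (le_of_lt (inv_pos.mpr ht0))) hl0 (le_of_lt ht0) (by ring)
  have hcomb : s⁻¹ • (z * s) + t • t⁻¹ = z + 1 := by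
    rw [smul_eq_mul, smul_eq_mul, mul_inv_cancel₀ ht0.ne', mul_comm z s, inv_mul_cancel_left₀ hs0.ne']
  rw [hcomb] at hconv
  have h1 : s⁻¹ • (z * s) ^ (ν + 1) = (1 + ε) * z ^ (ν + 1) := by
    rw [smul_eq_mul, mul_pow, ← hsν]
    field_simp
    ring
  have h2 : t • (t⁻¹) ^ (ν + 1) = (t⁻¹) ^ ν := by
    rw [smul_eq_mul, pow_succ]
    field_simp
  rw [h1, h2] at hconv
  -- bound t⁻¹ ≤ ν * (1 + 1/ε)
  have htinv : t⁻¹ ≤ ν * (1 + 1/ε) := by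
    have ht_eq : t = (s - 1) / s := by rw [ht_def]; field_simp
    rw [ht_eq, inv_div, div_le_iff₀ (by linarith)]
    have hεs : ε = s ^ ν - 1 := by rw [hsν]; ring
    have hrw : (ν : ℝ) * (1 + 1/ε) * (s - 1) = ((ν : ℝ) * (1 + ε) * (s - 1)) / ε := by
      field_simp
      ring_nf
    rw [hrw, le_div_iff₀ hε]
    have key' := key
    rw [hsν] at key'
    linarith
  have hpow : (t⁻¹) ^ ν ≤ ((ν : ℝ) * (1 + 1/ε)) ^ ν :=
    pow_le_pow_left₀ (le_of_lt (inv_pos.mpr ht0)) htinv ν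
  have : ((ν : ℝ) * (1 + 1/ε)) ^ ν = (1 + 1/ε) ^ ν * (ν:ℝ) ^ ν := by
    rw [mul_pow]; ring
  linarith [hconv, hpow, this ▸ hpow]
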